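/- For any integer h ≥ 1, real constants 0 < α < 1 and κ, c > 0 with c/κ > (h−1)α, and any 1 ≤ u ≤ t: ∫_u^t x^{−hα} exp( (c/κ)·x^{1−α}/(1−α) ) dx ≤ (c/κ − (h−1)α)^{−1} · [ x^{−(h−1)α} exp( (c/κ)·x^{1−α}/(1−α) ) ]_{x=u}^{x=t}. -/

import Mathlib

open Real

/-- **Integration-by-parts inequality (used in Lemma B.8).**
For any integer `h ≥ 1`, constants `0 < α < 1`, `κ, c > 0` with `c/κ > (h−1)α`,
and any `1 ≤ u ≤ t`:
`∫_u^t x^{−hα} exp((c/κ) x^{1−α}/(1−α)) dx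
  ≤ (c/κ − (h−1)α)⁻¹ [x^{−(h−1)α} exp((c/κ) x^{1−α}/(1−α))]_{x=u}^{x=t}`. -/
theorem int_by_parts_rpow_exp_bound
    (h : ℕ) (hh : 1 ≤ h) (α κ c u t : ℝ)
    (hα1 : 0 < α) (hα2 : α < 1) (hκ : 0 < κ) (hc : 0 < c)
    (hcκ : (h - 1 : ℝ) * α < c / κ) (hu : 1 ≤ u) (hut : u ≤ t) :
    (∫ x in u..t, x ^ (-(h : ℝ) * α) * Real.exp ((c / κ) * x ^ (1 - α) / (1 - α)))
      ≤ (c / κ - (h - 1 : ℝ) * α)⁻¹ *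
        ((t ^ (-((h : ℝ) - 1) * α) * Real.exp ((c / κ) * t ^ (1 - α) / (1 - α)))
          - (u ^ (-((h : ℝ) - 1) * α) * Real.exp ((c / κ) * u ^ (1 - α) / (1 - α)))) := by
  have hr0 : 0 < c / κ := div_pos hc hκ
  set r : ℝ := c / κ with hr
  set p : ℝ := -((h : ℝ) - 1) * α with hp
  set q : ℝ := -(h : ℝ) * α with hq
  have hA : 0 < r - ((h : ℝ) - 1) * α := sub_pos.mpr hcκ
  set A : ℝ := r - ((h : ℝ) - 1) * α with hAdef
  set f : ℝ → ℝ := fun x => x ^ q * Real.exp (r * x ^ (1 - α) / (1 - α)) with hf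
  set g : ℝ → ℝ := fun x => x ^ p * Real.exp (r * x ^ (1 - α) / (1 - α)) with hg
  set g' : ℝ → ℝ := fun x =>
    (p * x ^ (p - 1)) * Real.exp (r * x ^ (1 - α) / (1 - α))
      + x ^ p * (Real.exp (r * x ^ (1 - α) / (1 - α)) * (r * x ^ (-α))) with hg'
  have h1α : (1 : ℝ) - α ≠ 0 := by linarith
  have hpos : ∀ x ∈ Set.Icc u t, 0 < x := fun x hx => lt_of_lt_of_le one_pos (hu.trans hx.1)
  -- derivative
  have hderiv : ∀ x ∈ Set.Icc u t, HasDerivAt g (g' x) x := by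
    intro x hx
    have hx0 : 0 < x := hpos x hx
    have h1 : HasDerivAt (fun y : ℝ => y ^ p) (p * x ^ (p - 1)) x :=
      Real.hasDerivAt_rpow_const (Or.inl hx0.ne')
    have h2 : HasDerivAt (fun y : ℝ => y ^ (1 - α)) ((1 - α) * x ^ (1 - α - 1)) x :=
      Real.hasDerivAt_rpow_const (Or.inl hx0.ne')
    have h3 : HasDerivAt (fun y : ℝ => r * y ^ (1 - α) / (1 - α)) (r * x ^ (-α)) x := by
      have := (h2.const_mul r).div_const (1 - α)
      refine this.congr_deriv ?_
      have : (1 : ℝ) - α - 1 = -α := by ring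
      rw [this]
      field_simp
    exact h1.mul h3.exp
  -- continuity of g' and f on [u,t]
  have hcontg' : ContinuousOn g' (Set.Icc u t) := by
    intro x hx
    have hx0 : 0 < x := hpos x hx
    apply ContinuousAt.continuousWithinAt
    have c1 : ContinuousAt (fun y : ℝ => y ^ p) x :=
      Real.continuousAt_rpow_const x p (Or.inl hx0.ne')
    have c2 : ContinuousAt (fun y : ℝ => y ^ (p - 1)) x :=
      Real.continuousAt_rpow_const x (p - 1) (Or.inl hx0.ne')
    have c3 : ContinuousAt (fun y : ℝ => y ^ (1 - α)) x :=
      Real.continuousAt_rpow_const x (1 - α) (Or.inl hx0.ne')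
    have c4 : ContinuousAt (fun y : ℝ => y ^ (-α)) x :=
      Real.continuousAt_rpow_const x (-α) (Or.inl hx0.ne')
    have c5 : ContinuousAt (fun y : ℝ => Real.exp (r * y ^ (1 - α) / (1 - α))) x :=
      (Real.continuous_exp.continuousAt).comp (((c3.const_mul r).div_const (1 - α)))
    exact ((c2.const_mul p).mul c5).add (c1.mul (c5.mul (c4.const_mul r)))
  have hcontf : ContinuousOn f (Set.Icc u t) := by
    intro x hx
    have hx0 : 0 < x := hpos x hx
    apply ContinuousAt.continuousWithinAt
    have c1 : ContinuousAt (fun y : ℝ => y ^ q) x :=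
      Real.continuousAt_rpow_const x q (Or.inl hx0.ne')
    have c3 : ContinuousAt (fun y : ℝ => y ^ (1 - α)) x :=
      Real.continuousAt_rpow_const x (1 - α) (Or.inl hx0.ne')
    have c5 : ContinuousAt (fun y : ℝ => Real.exp (r * y ^ (1 - α) / (1 - α))) x :=
      (Real.continuous_exp.continuousAt).comp (((c3.const_mul r).div_const (1 - α)))
    exact c1.mul c5
  have hintg' : IntervalIntegrable g' MeasureTheory.volume u t :=
    (hcontg'.mono (by rw [Set.uIcc_of_le hut])).intervalIntegrable
  have hintf : IntervalIntegrable f MeasureTheory.volume u t :=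
    (hcontf.mono (by rw [Set.uIcc_of_le hut])).intervalIntegrable
  have hintAf : IntervalIntegrable (fun x => A * f x) MeasureTheory.volume u t :=
    hintf.const_mul A
  -- FTC
  have hFTC : ∫ x in u..t, g' x = g t - g u := by
    apply intervalIntegral.integral_eq_sub_of_hasDerivAt
    · intro x hx
      exact hderiv x (by rwa [Set.uIcc_of_le hut] at hx)
    · exact hintg'
  -- pointwise bound
  have hle : ∀ x ∈ Set.Icc u t, A * f x ≤ g' x := by
    intro x hx
    have hx0 : 0 < x := hpos x hx
    have hx1 : 1 ≤ x := hu.trans hx.1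
    have hs : x ^ (α - 1) ≤ 1 :=
      Real.rpow_le_one_of_one_le_of_nonpos hx1 (by linarith)
    have hs0 : 0 ≤ x ^ (α - 1) := (Real.rpow_pos_of_pos hx0 _).le
    have e1 : x ^ (p - 1) = x ^ q * x ^ (α - 1) := by
      rw [← Real.rpow_add hx0]; congr 1; rw [hp, hq]; ring
    have e2 : x ^ p * x ^ (-α) = x ^ q := by
      rw [← Real.rpow_add hx0]; congr 1; rw [hp, hq]; ring
    have hE : 0 < Real.exp (r * x ^ (1 - α) / (1 - α)) := Real.exp_pos _
    have hX : 0 < x ^ q := Real.rpow_pos_of_pos hx0 _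
    have hRHS : g' x = x ^ q * Real.exp (r * x ^ (1 - α) / (1 - α)) *
        (p * x ^ (α - 1) + r) := by
      simp only [hg']
      rw [e1, show x ^ p * (Real.exp (r * x ^ (1 - α) / (1 - α)) * (r * x ^ (-α)))
          = (x ^ p * x ^ (-α)) * (Real.exp (r * x ^ (1 - α) / (1 - α)) * r) from by ring,
        e2]
      ring
    rw [hRHS]
    have hh1 : (0 : ℝ) ≤ ((h : ℝ) - 1) * α := by
      have : (1 : ℝ) ≤ (h : ℝ) := by exact_mod_cast hh
      nlinarith
    have hAle : A ≤ p * x ^ (α - 1) + r := by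
      rw [hAdef, hp]
      nlinarith
    calc A * f x = A * (x ^ q * Real.exp (r * x ^ (1 - α) / (1 - α))) := rfl
      _ ≤ (p * x ^ (α - 1) + r) * (x ^ q * Real.exp (r * x ^ (1 - α) / (1 - α))) :=
        mul_le_mul_of_nonneg_right hAle (by positivity)
      _ = x ^ q * Real.exp (r * x ^ (1 - α) / (1 - α)) * (p * x ^ (α - 1) + r) := by ring
  have hmono : (∫ x in u..t, A * f x) ≤ ∫ x in u..t, g' x :=
    intervalIntegral.integral_mono_on hut hintAf hintg' hle
  rw [intervalIntegral.integral_const_mul, hFTC] at hmono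
  have hfinal : (∫ x in u..t, f x) ≤ A⁻¹ * (g t - g u) := by
    rw [inv_mul_eq_div, le_div_iff₀ hA]
    linarith [hmono]
  exact hfinal
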